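/- Let m ≥ 1, let H_m(ℂ) = {X ∈ M_m(ℂ) : Xᴴ = X} be the real vector space of Hermitian complex m×m matrices (of real dimension m²), and let A ∈ H_m(ℂ). Then the map B ↦ A·B·A maps H_m(ℂ) to itself, and its determinant as an ℝ-linear endomorphism of H_m(ℂ) equals (det A)^{2m} (note det A is real for Hermitian A). -/

import Mathlib

open Matrix

/-- The real subspace of Hermitian complex `m × m` matrices. -/
noncomputable def hermMatrices (m : ℕ) : Submodule ℝ (Matrix (Fin m) (Fin m) ℂ) where
  carrier := {X | Xᴴ = X}
  add_mem' := by
    intro a b ha hb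
    simp only [Set.mem_setOf_eq] at *
    rw [Matrix.conjTranspose_add, ha, hb]
  zero_mem' := Matrix.conjTranspose_zero
  smul_mem' := by
    intro c a ha
    simp only [Set.mem_setOf_eq] at *
    rw [Matrix.conjTranspose_smul, star_trivial, ha]

namespace Stmt11Aux

variable {m : ℕ}

lemma herm_prop (X : hermMatrices m) : (X : Matrix (Fin m) (Fin m) ℂ)ᴴ = X := X.prop

lemma herm_entry (X : hermMatrices m) (i j : Fin m) :
    (starRingEnd ℂ) ((X : Matrix (Fin m) (Fin m) ℂ) j i) = (X : Matrix (Fin m) (Fin m) ℂ) i j := by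
  conv_rhs => rw [← herm_prop X]
  rfl

/-- Real coordinates on the Hermitian matrices. -/
noncomputable def hermCoord (m : ℕ) : hermMatrices m ≃ₗ[ℝ] (Fin m × Fin m → ℝ) where
  toFun X p := if p.1 ≤ p.2 then ((X : Matrix (Fin m) (Fin m) ℂ) p.1 p.2).re
    else ((X : Matrix (Fin m) (Fin m) ℂ) p.2 p.1).im
  map_add' X Y := by
    funext p
    by_cases h : p.1 ≤ p.2 <;> simp [h]
  map_smul' c X := by
    funext p
    by_cases h : p.1 ≤ p.2 <;> simp [h, Complex.smul_re, Complex.smul_im]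
  invFun f := ⟨Matrix.of fun i j =>
      if i = j then ((f (i, i) : ℝ) : ℂ)
      else if i < j then ⟨f (i, j), f (j, i)⟩ else ⟨f (j, i), -f (i, j)⟩, by
    show _ᴴ = _
    ext i j
    rcases lt_trichotomy i j with h | h | h
    · simp [Matrix.conjTranspose_apply, h.ne, h.ne', h, not_lt_of_gt h,
        Complex.ext_iff, Complex.star_def, Complex.conj_re, Complex.conj_im]
    · subst h
      simp [Matrix.conjTranspose_apply, Complex.ext_iff, Complex.star_def]
    · simp [Matrix.conjTranspose_apply, h.ne, h.ne', h, not_lt_of_gt h,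
        Complex.ext_iff, Complex.star_def, Complex.conj_re, Complex.conj_im]⟩
  left_inv X := by
    apply Subtype.ext
    ext i j
    rcases lt_trichotomy i j with h | h | h
    · simp only [Matrix.of_apply, h.ne, if_neg, h, if_pos, if_true, le_of_lt h]
      simp [h.ne, h, le_of_lt h, Complex.ext_iff]
    · subst h
      simp only [Matrix.of_apply, if_pos rfl]
      have him : ((X : Matrix (Fin m) (Fin m) ℂ) i i).im = 0 := by
        have := herm_entry X i i
        rw [Complex.ext_iff] at this
        have h2 := this.2
        simp only [Complex.conj_im] at h2
        linarith
      simp [Complex.ext_iff, him]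
    · -- i > j
      have h1 : ¬ i = j := h.ne'
      have h2 : ¬ i < j := not_lt_of_gt h
      have h3 : ¬ (i ≤ j) := not_le_of_gt h
      simp only [Matrix.of_apply, if_neg h1, if_neg h2]
      have := herm_entry X i j
      rw [Complex.ext_iff] at this
      simp only [Complex.conj_re, Complex.conj_im] at this
      simp [le_of_lt h, h3, Complex.ext_iff]
      constructor
      · exact this.1
      · linarith [this.2]
  right_inv f := by
    funext p
    obtain ⟨i, j⟩ := p
    rcases lt_trichotomy i j with h | h | h
    · simp [le_of_lt h, h.ne, h]
    · subst h
      simp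
    · have h3 : ¬ (i ≤ j) := not_le_of_gt h
      simp [h3, h.ne', h.ne, not_lt_of_gt h, h]

/-- Determinant of `X ↦ D X D` for a real diagonal `D`. -/
theorem det_of_diag (c : Fin m → ℝ) (Q : hermMatrices m →ₗ[ℝ] hermMatrices m)
    (hQ : ∀ X : hermMatrices m, (Q X : Matrix (Fin m) (Fin m) ℂ)
      = Matrix.diagonal (fun i => (c i : ℂ)) * X * Matrix.diagonal (fun i => (c i : ℂ))) :
    LinearMap.det Q = ∏ p : Fin m × Fin m, c p.1 * c p.2 := by
  have key : ((hermCoord m : hermMatrices m →ₗ[ℝ] (Fin m × Fin m → ℝ)) ∘ₗ Q ∘ₗ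
        ((hermCoord m).symm : (Fin m × Fin m → ℝ) →ₗ[ℝ] hermMatrices m))
      = Matrix.toLin' (Matrix.diagonal fun p : Fin m × Fin m => c p.1 * c p.2) := by
    apply LinearMap.ext
    intro f
    funext p
    obtain ⟨i, j⟩ := p
    set X := (hermCoord m).symm f with hX
    have hf : ∀ q, (hermCoord m) X q = f q := by
      intro q; rw [hX, (hermCoord m).apply_symm_apply]
    have hentry : ∀ a b : Fin m, (Q X : Matrix (Fin m) (Fin m) ℂ) a b
        = (c a : ℂ) * (X : Matrix (Fin m) (Fin m) ℂ) a b * (c b : ℂ) := by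
      intro a b
      rw [hQ X]
      simp [Matrix.mul_apply, Matrix.diagonal, Finset.mul_sum, Finset.sum_mul]
    simp only [LinearMap.comp_apply, LinearEquiv.coe_coe, Matrix.toLin'_apply,
      Matrix.mulVec_diagonal]
    show (if i ≤ j then ((Q X : Matrix (Fin m) (Fin m) ℂ) i j).re
        else ((Q X : Matrix (Fin m) (Fin m) ℂ) j i).im) = c i * c j * f (i, j)
    by_cases h : i ≤ j
    · rw [if_pos h, hentry i j]
      have := hf (i, j)
      simp only [hermCoord, LinearEquiv.coe_mk, LinearMap.coe_mk, AddHom.coe_mk, if_pos h] at this ⊢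
      rw [mul_comm ((c i : ℂ) * _) (c j : ℂ), ← mul_assoc, ← Complex.ofReal_mul,
        Complex.re_ofReal_mul, this]
      try ring
    · rw [if_neg h, hentry j i]
      have := hf (i, j)
      simp only [hermCoord, LinearEquiv.coe_mk, LinearMap.coe_mk, AddHom.coe_mk, if_neg h] at this
      rw [mul_comm ((c j : ℂ) * _) (c i : ℂ), ← mul_assoc, ← Complex.ofReal_mul,
        Complex.im_ofReal_mul, this]
      try ring
  have := LinearMap.det_conj Q (hermCoord m)
  rw [key] at this
  rw [← this, LinearMap.det_toLin', Matrix.det_diagonal]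

/-- Conjugation by a unitary as a linear automorphism of Hermitian matrices. -/
noncomputable def conjEquiv (U : Matrix.unitaryGroup (Fin m) ℂ) :
    hermMatrices m ≃ₗ[ℝ] hermMatrices m where
  toFun X := ⟨(U : Matrix (Fin m) (Fin m) ℂ) * X * star (U : Matrix (Fin m) (Fin m) ℂ), by
    show _ᴴ = _
    simp only [Matrix.star_eq_conjTranspose, Matrix.conjTranspose_mul,
      Matrix.conjTranspose_conjTranspose, herm_prop, Matrix.mul_assoc]⟩
  map_add' X Y := by
    apply Subtype.ext
    simp [Matrix.mul_add, Matrix.add_mul]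
  map_smul' r X := by
    apply Subtype.ext
    simp [Matrix.mul_smul, Matrix.smul_mul]
  invFun X := ⟨star (U : Matrix (Fin m) (Fin m) ℂ) * X * (U : Matrix (Fin m) (Fin m) ℂ), by
    show _ᴴ = _
    simp only [Matrix.star_eq_conjTranspose, Matrix.conjTranspose_mul,
      Matrix.conjTranspose_conjTranspose, herm_prop, Matrix.mul_assoc]⟩
  left_inv X := by
    apply Subtype.ext
    show star (U : Matrix (Fin m) (Fin m) ℂ) * ((U : Matrix (Fin m) (Fin m) ℂ) * X *
      star (U : Matrix (Fin m) (Fin m) ℂ)) * (U : Matrix (Fin m) (Fin m) ℂ) = X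
    have h1 : star (U : Matrix (Fin m) (Fin m) ℂ) * (U : Matrix (Fin m) (Fin m) ℂ) = 1 := U.2.1
    rw [← Matrix.mul_assoc, ← Matrix.mul_assoc, h1, Matrix.one_mul,
      Matrix.mul_assoc, h1, Matrix.mul_one]
  right_inv X := by
    apply Subtype.ext
    show (U : Matrix (Fin m) (Fin m) ℂ) * (star (U : Matrix (Fin m) (Fin m) ℂ) * X *
      (U : Matrix (Fin m) (Fin m) ℂ)) * star (U : Matrix (Fin m) (Fin m) ℂ) = X
    have h1 : (U : Matrix (Fin m) (Fin m) ℂ) * star (U : Matrix (Fin m) (Fin m) ℂ) = 1 := U.2.2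
    rw [← Matrix.mul_assoc, ← Matrix.mul_assoc, h1, Matrix.one_mul,
      Matrix.mul_assoc, h1, Matrix.mul_one]

end Stmt11Aux

open Stmt11Aux in
/-- For `A ∈ H_m(ℂ)` Hermitian, the map `B ↦ A·B·A` maps `H_m(ℂ)` to itself,
and its determinant as an ℝ-linear endomorphism of `H_m(ℂ)` equals `(det A)^(2m)`
(with `det A` real for Hermitian `A`). -/
theorem stmt_11 (m : ℕ) (hm : 1 ≤ m) (A : Matrix (Fin m) (Fin m) ℂ) (hA : Aᴴ = A) :
    (∀ B : Matrix (Fin m) (Fin m) ℂ, Bᴴ = B → (A * B * A)ᴴ = A * B * A)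
    ∧ ∀ P : hermMatrices m →ₗ[ℝ] hermMatrices m,
        (∀ X : hermMatrices m, (P X : Matrix (Fin m) (Fin m) ℂ)
          = A * (X : Matrix (Fin m) (Fin m) ℂ) * A) →
        ((LinearMap.det P : ℝ) : ℂ) = A.det ^ (2 * m) := by
  have hA' : A.IsHermitian := hA
  constructor
  · intro B hB
    simp only [Matrix.conjTranspose_mul, hA, hB, Matrix.mul_assoc]
  · intro P hP
    set U := hA'.eigenvectorUnitary with hU
    set c := hA'.eigenvalues with hc
    have hspec : (star (U : Matrix (Fin m) (Fin m) ℂ)) * A * (U : Matrix (Fin m) (Fin m) ℂ)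
        = Matrix.diagonal (fun i => (c i : ℂ)) := by
      rw [hU, hc]
      have h := Matrix.IsHermitian.conjStarAlgAut_star_eigenvectorUnitary hA'
      rw [Unitary.conjStarAlgAut_star_apply] at h
      exact h
    set e := conjEquiv (m := m) U with he
    set Q := ((e.symm : hermMatrices m →ₗ[ℝ] hermMatrices m) ∘ₗ P ∘ₗ
      (e : hermMatrices m →ₗ[ℝ] hermMatrices m)) with hQdef
    have hQ : ∀ X : hermMatrices m, (Q X : Matrix (Fin m) (Fin m) ℂ)
        = Matrix.diagonal (fun i => (c i : ℂ)) * X * Matrix.diagonal (fun i => (c i : ℂ)) := by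
      intro X
      have h1 : ((e X : hermMatrices m) : Matrix (Fin m) (Fin m) ℂ)
          = (U : Matrix (Fin m) (Fin m) ℂ) * X * star (U : Matrix (Fin m) (Fin m) ℂ) := rfl
      have h2 : (Q X : Matrix (Fin m) (Fin m) ℂ)
          = star (U : Matrix (Fin m) (Fin m) ℂ) * ((P (e X) : Matrix (Fin m) (Fin m) ℂ))
            * (U : Matrix (Fin m) (Fin m) ℂ) := rfl
      have key : star (U : Matrix (Fin m) (Fin m) ℂ) * (A * ((U : Matrix (Fin m) (Fin m) ℂ)
            * X * star (U : Matrix (Fin m) (Fin m) ℂ)) * A) * (U : Matrix (Fin m) (Fin m) ℂ)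
          = (star (U : Matrix (Fin m) (Fin m) ℂ) * A * (U : Matrix (Fin m) (Fin m) ℂ)) * X
            * (star (U : Matrix (Fin m) (Fin m) ℂ) * A * (U : Matrix (Fin m) (Fin m) ℂ)) := by
        simp only [Matrix.mul_assoc]
      rw [h2, hP (e X), h1, key, hspec]
    have hdetQ : LinearMap.det Q = ∏ p : Fin m × Fin m, c p.1 * c p.2 := det_of_diag c Q hQ
    have hdetP : LinearMap.det P = ∏ p : Fin m × Fin m, c p.1 * c p.2 := by
      rw [← hdetQ, hQdef]
      exact (LinearMap.det_conj P e.symm).symm ▸ rfl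
    rw [hdetP, hA'.det_eq_prod_eigenvalues]
    push_cast
    rw [Fintype.prod_prod_type]
    have : ∀ i : Fin m, (∏ j : Fin m, ((c i : ℂ) * (c j : ℂ)))
        = (c i : ℂ) ^ m * ∏ j : Fin m, (c j : ℂ) := by
      intro i
      rw [Finset.prod_mul_distrib, Finset.prod_const, Finset.card_fin]
    simp only [this]
    rw [Finset.prod_mul_distrib, Finset.prod_pow, Finset.prod_const, Finset.card_fin]
    rw [two_mul, pow_add, ← hc]
    rfl
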